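/- Assume 0 < q ≤ 1, α > 0, q + 1 < p ≤ 2, with the additional hypothesis a ≥ q(1−q) in case p = 2. Then ‖ẋ(t)‖ = O(1/t^{q}) as t → ∞ and g(x(t)) − g* = O(1/t^{2q}) as t → ∞. -/

import Mathlib

open Filter Topology Set MeasureTheory

local notation "⟪" x ", " y "⟫" => @inner ℝ _ _ x y

lemma grad_convex_ineq {H : Type*} [NormedAddCommGroup H] [InnerProductSpace ℝ H] [CompleteSpace H]
    (g : H → ℝ) (hg : ConvexOn ℝ Set.univ g) {z Gz : H} (hz : HasGradientAt g Gz z) (y : H) :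
    g z + ⟪Gz, y - z⟫ ≤ g y := by
  set v := y - z with hv
  have hline : HasDerivAt (fun s : ℝ => z + s • v) v 0 := by
    simpa using ((hasDerivAt_id (0:ℝ)).smul_const v).const_add z
  have hφ : HasDerivAt (fun s : ℝ => g (z + s • v)) ⟪Gz, v⟫ 0 := by
    have h0 : (fun s : ℝ => z + s • v) 0 = z := by simp
    have := (h0 ▸ hz.hasFDerivAt : HasFDerivAt g _ ((fun s : ℝ => z + s • v) 0)).comp_hasDerivAt 0 hline
    simpa [InnerProductSpace.toDual_apply_apply, Function.comp_def] using this
  have hslope : Tendsto (slope (fun s : ℝ => g (z + s • v)) 0) (𝓝[>] 0) (𝓝 ⟪Gz, v⟫) :=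
    (hasDerivAt_iff_tendsto_slope.mp hφ).mono_left (nhdsWithin_mono _ (by
      intro s hs; exact ne_of_gt hs))
  have hbound : ∀ᶠ s in 𝓝[>] (0:ℝ), slope (fun s : ℝ => g (z + s • v)) 0 s ≤ g y - g z := by
    filter_upwards [Ioc_mem_nhdsGT_of_mem (by norm_num : (0:ℝ) ∈ Ico 0 1)] with s hs
    have hs0 : 0 < s := hs.1
    have hs1 : s ≤ 1 := hs.2
    have hcvx := hg.2 (mem_univ z) (mem_univ y) (by linarith : (0:ℝ) ≤ 1 - s) hs0.le (by ring)
    have hzsv : z + s • v = (1 - s) • z + s • y := by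
      rw [hv]; module
    rw [slope_def_field]
    have : g (z + s • v) ≤ (1 - s) * g z + s * g y := by
      rw [hzsv]; simpa [smul_eq_mul] using hcvx
    have h2 : (g (z + s • v) - g (z + (0:ℝ) • v)) / s ≤ g y - g z := by
      rw [div_le_iff₀ hs0]
      simp only [zero_smul, add_zero]
      nlinarith
    simpa [div_eq_inv_mul] using h2
  have := le_of_tendsto hslope hbound
  linarith

set_option maxHeartbeats 1000000 in
lemma scalar_ineq (t A B F XX XV UU UV VV GV GU UX W α a q p : ℝ)
    (hA : 0 < A) (ht : 0 < t) (hB : 0 < B)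
    (hα : 0 < α) (ha : 0 < a) (hp0 : 0 < p)
    (hUX : UX = (XX - W + UU)/2)
    (hGU : F ≤ GU)
    (hF : 0 ≤ F) (hXX : 0 ≤ XX) (hUU : 0 ≤ UU) (hVV : 0 ≤ VV)
    (hc1 : q * (A/t) ≤ α/4)
    (hc2 : q*(1-q) ≤ a * (t*t/B)) :
    ((2*q)*(A*A/t)*F + (A*A)*GV)
    + ((a/2)*((2*q-p)*(A*A/(B*t)))*XX + (a/2)*(A*A/B)*(2*XV))
    + ((α/2 + q*(A/t) - α)*((α/2)*UV + A*VV) - A*((α/2)*GU + A*GV) - (a*A/B)*((α/2)*UX + A*XV))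
    + (((α/2)/2)*(q*(1-q)*(A/(t*t)))*UU + ((α/2)/2)*(α - α/2 - q*(A/t))*(2*UV))
    + (-(a*(α/2)*W/2)*(A/B)) ≤ 0 := by
  have key : ((2*q)*(A*A/t)*F + (A*A)*GV)
      + ((a/2)*((2*q-p)*(A*A/(B*t)))*XX + (a/2)*(A*A/B)*(2*XV))
      + ((α/2 + q*(A/t) - α)*((α/2)*UV + A*VV) - A*((α/2)*GU + A*GV) - (a*A/B)*((α/2)*UX + A*XV))
      + (((α/2)/2)*(q*(1-q)*(A/(t*t)))*UU + ((α/2)/2)*(α - α/2 - q*(A/t))*(2*UV))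
      + (-(a*(α/2)*W/2)*(A/B))
      = (A*(2*q*(A/t) - α/2))*F + (-(α/2)*A)*(GU - F)
        + ((a*A/(2*B))*((2*q-p)*(A/t) - α/2))*XX
        + ((q*(A/t) - α/2)*A)*VV
        + (((α/2)*A/2)*(q*(1-q)/(t*t) - a/B))*UU := by
    rw [hUX]; field_simp; ring
  rw [key]
  have hAt : 0 < A/t := div_pos hA ht
  have h1 : (A*(2*q*(A/t) - α/2))*F ≤ 0 :=
    mul_nonpos_of_nonpos_of_nonneg (by nlinarith) hF
  have h2 : (-(α/2)*A)*(GU - F) ≤ 0 :=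
    mul_nonpos_of_nonpos_of_nonneg (by nlinarith) (by linarith)
  have h3 : ((a*A/(2*B))*((2*q-p)*(A/t) - α/2))*XX ≤ 0 := by
    have hle : (2*q-p)*(A/t) ≤ 2*q*(A/t) := by nlinarith [mul_pos hp0 hAt]
    have : (a*A/(2*B)) ≥ 0 := by positivity
    exact mul_nonpos_of_nonpos_of_nonneg (mul_nonpos_of_nonneg_of_nonpos this (by nlinarith)) hXX
  have h4 : ((q*(A/t) - α/2)*A)*VV ≤ 0 :=
    mul_nonpos_of_nonpos_of_nonneg (mul_nonpos_of_nonpos_of_nonneg (by nlinarith) hA.le) hVV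
  have h5 : (((α/2)*A/2)*(q*(1-q)/(t*t) - a/B))*UU ≤ 0 := by
    have hq : q*(1-q)/(t*t) - a/B ≤ 0 := by
      rw [sub_nonpos, div_le_div_iff₀ (by positivity) hB]
      calc q*(1-q)*B ≤ a * (t*t/B) * B := by nlinarith [hB]
        _ = a*(t*t) := by field_simp
    exact mul_nonpos_of_nonpos_of_nonneg (mul_nonpos_of_nonneg_of_nonpos (by positivity) hq) hUU
  linarith

set_option maxHeartbeats 2000000 in
theorem stmt7
    {H : Type*} [NormedAddCommGroup H] [InnerProductSpace ℝ H] [CompleteSpace H]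
    (g : H → ℝ) (g' : H → H)
    (hg_convex : ConvexOn ℝ Set.univ g)
    (hg_grad : ∀ y : H, HasGradientAt g (g' y) y)
    (hg_lip : ∀ s : Set H, Bornology.IsBounded s → ∃ K : NNReal, LipschitzOnWith K g' s)
    (t₀ α q a p : ℝ) (ht₀ : 0 < t₀) (hα : 0 < α) (hq0 : 0 < q) (ha0 : 0 < a) (hp0 : 0 < p)
    (x x' x'' : ℝ → H)
    (hx : ∀ t ≥ t₀, HasDerivAt x (x' t) t)
    (hx' : ∀ t ≥ t₀, HasDerivAt x' (x'' t) t)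
    (hx''c : ContinuousOn x'' (Set.Ici t₀))
    (hODE : ∀ t ≥ t₀, x'' t + (α / t ^ q) • x' t + g' (x t) + (a / t ^ p) • x t = 0)
    (xstar : H) (hxstar : ∀ y : H, g xstar ≤ g y)
    (hq1 : q ≤ 1) (hqp : q + 1 < p) (hp2 : p ≤ 2) (hpa : p = 2 → a ≥ q * (1 - q)) :
    (∃ C > (0:ℝ), ∃ t₁ ≥ t₀, ∀ t ≥ t₁, |‖x' t‖| ≤ C / t ^ (q)) ∧
    (∃ C > (0:ℝ), ∃ t₁ ≥ t₀, ∀ t ≥ t₁, |g (x t) - g xstar| ≤ C / t ^ (2 * q)) := by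
  have hq1' : q < 1 := by linarith
  -- the constant K
  set W : ℝ := ⟪xstar, xstar⟫ with hW
  have hW0 : 0 ≤ W := real_inner_self_nonneg
  set K : ℝ := a*(α/2)*W/2/(p-q-1) with hK
  have hpq1 : 0 < p - q - 1 := by linarith
  have hK0 : 0 ≤ K := by
    apply div_nonneg _ hpq1.le
    positivity
  -- the energy function
  set EE : ℝ → ℝ := fun s => s^(2*q) * (g (x s) - g xstar)
      + a/2 * s^(2*q-p) * ⟪x s, x s⟫
      + 1/2 * ⟪(α/2) • (x s - xstar) + s^q • x' s, (α/2) • (x s - xstar) + s^q • x' s⟫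
      + α/2/2 * (α - α/2 - q * s^(q-1)) * ⟪x s - xstar, x s - xstar⟫
      + K * s^(q+1-p) with hEE
  set DD : ℝ → ℝ := fun t =>
    ((2*q)*(t^q*t^q/t)*(g (x t) - g xstar) + (t^q*t^q)*⟪g' (x t), x' t⟫)
    + ((a/2)*((2*q-p)*(t^q*t^q/(t^p*t)))*⟪x t, x t⟫ + (a/2)*(t^q*t^q/t^p)*(2*⟪x t, x' t⟫))
    + ((α/2 + q*(t^q/t) - α)*((α/2)*⟪x t - xstar, x' t⟫ + t^q*⟪x' t, x' t⟫)
        - t^q*((α/2)*⟪g' (x t), x t - xstar⟫ + t^q*⟪g' (x t), x' t⟫)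
        - (a*t^q/t^p)*((α/2)*⟪x t - xstar, x t⟫ + t^q*⟪x t, x' t⟫))
    + ((α/2/2)*(q*(1-q)*(t^q/(t*t)))*⟪x t - xstar, x t - xstar⟫
        + (α/2/2)*(α - α/2 - q*(t^q/t))*(2*⟪x t - xstar, x' t⟫))
    + (-(a*(α/2)*W/2)*(t^q/t^p)) with hDD
  -- find the threshold T
  have htend1 : Tendsto (fun t : ℝ => q * t^(q-1)) atTop (𝓝 0) := by
    have h0 : Tendsto (fun t : ℝ => t^(q-1)) atTop (𝓝 0) := by
      have := tendsto_rpow_neg_atTop (y := 1-q) (by linarith)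
      convert this using 2 with t
      ring_nf
    simpa using h0.const_mul q
  have hev1 : ∀ᶠ t in atTop, q * t^(q-1) < α/4 :=
    htend1.eventually_lt_const (by positivity)
  have hev2 : ∀ᶠ t in atTop, q*(1-q) ≤ a * t^(2-p) := by
    rcases eq_or_lt_of_le hp2 with hpe | hpl
    · filter_upwards with t
      have : (2:ℝ) - p = 0 := by rw [← hpe]; ring
      rw [this, Real.rpow_zero, mul_one]
      exact hpa hpe
    · have h1 : Tendsto (fun t : ℝ => a * t^(2-p)) atTop atTop :=
        (tendsto_rpow_atTop (by linarith)).const_mul_atTop ha0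
      exact h1.eventually_ge_atTop _
  obtain ⟨T₁, hT₁⟩ := eventually_atTop.mp (hev1.and hev2)
  set T : ℝ := max T₁ (max t₀ 1) with hTdef
  have hTt₀ : t₀ ≤ T := le_trans (le_max_left _ _) (le_max_right _ _)
  have hT1 : (1:ℝ) ≤ T := le_trans (le_max_right _ _) (le_max_right _ _)
  have hTcond : ∀ t ≥ T, q * t^(q-1) < α/4 ∧ q*(1-q) ≤ a * t^(2-p) :=
    fun t ht => hT₁ t (le_trans (le_max_left _ _) ht)
  -- the derivative
  have hder : ∀ t ∈ Ici T, HasDerivAt EE (DD t) t := by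
    intro t ht
    rw [mem_Ici] at ht
    have ht' : t₀ ≤ t := le_trans hTt₀ ht
    have ht0 : (0:ℝ) < t := lt_of_lt_of_le one_pos (hT1.trans ht)
    have hxt := hx t ht'
    have hvt := hx' t ht'
    have hrp : ∀ r : ℝ, HasDerivAt (fun s : ℝ => s ^ r) (r * t^(r-1)) t :=
      fun r => Real.hasDerivAt_rpow_const (Or.inl ht0.ne')
    have hgx : HasDerivAt (fun s => g (x s)) ⟪g' (x t), x' t⟫ t := by
      have := (hg_grad (x t)).hasFDerivAt.comp_hasDerivAt t hxt
      simpa [InnerProductSpace.toDual_apply_apply, Function.comp_def] using this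
    have hu : HasDerivAt (fun s => x s - xstar) (x' t) t := hxt.sub_const xstar
    have hh : HasDerivAt (fun s => (α/2) • (x s - xstar) + s^q • x' s)
        ((α/2) • x' t + (t^q • x'' t + (q * t^(q-1)) • x' t)) t :=
      (hu.const_smul (α/2)).add ((hrp q).smul hvt)
    have h1 : HasDerivAt (fun s => s^(2*q) * (g (x s) - g xstar))
        ((2*q) * t^(2*q-1) * (g (x t) - g xstar) + t^(2*q) * ⟪g' (x t), x' t⟫) t :=
      (hrp (2*q)).mul (hgx.sub_const (g xstar))
    have h2 : HasDerivAt (fun s => a/2 * s^(2*q-p) * ⟪x s, x s⟫)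
        ((a/2 * ((2*q-p) * t^(2*q-p-1))) * ⟪x t, x t⟫
          + (a/2 * t^(2*q-p)) * (⟪x t, x' t⟫ + ⟪x' t, x t⟫)) t :=
      ((hrp (2*q-p)).const_mul (a/2)).mul (hxt.inner ℝ hxt)
    have h3 : HasDerivAt (fun s => 1/2 * ⟪(α/2) • (x s - xstar) + s^q • x' s,
          (α/2) • (x s - xstar) + s^q • x' s⟫)
        (1/2 * (⟪(α/2) • (x t - xstar) + t^q • x' t,
            (α/2) • x' t + (t^q • x'' t + (q * t^(q-1)) • x' t)⟫
          + ⟪(α/2) • x' t + (t^q • x'' t + (q * t^(q-1)) • x' t),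
            (α/2) • (x t - xstar) + t^q • x' t⟫)) t :=
      (hh.inner ℝ hh).const_mul (1/2)
    have h4 : HasDerivAt (fun s => α/2/2 * (α - α/2 - q * s^(q-1)) * ⟪x s - xstar, x s - xstar⟫)
        ((α/2/2 * -(q * ((q-1) * t^(q-1-1)))) * ⟪x t - xstar, x t - xstar⟫
          + (α/2/2 * (α - α/2 - q * t^(q-1))) * (⟪x t - xstar, x' t⟫ + ⟪x' t, x t - xstar⟫)) t :=
      ((((hrp (q-1)).const_mul q).const_sub (α - α/2)).const_mul (α/2/2)).mul (hu.inner ℝ hu)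
    have h5 : HasDerivAt (fun s => K * s^(q+1-p)) (K * ((q+1-p) * t^(q+1-p-1))) t :=
      (hrp (q+1-p)).const_mul K
    have hcomp := (((h1.add h2).add h3).add h4).add h5
    rw [hEE, hDD]
    refine hcomp.congr_deriv ?_
    have hode : x'' t = -((α / t ^ q) • x' t + g' (x t) + (a / t ^ p) • x t) := by
      have h0 := hODE t ht'
      have h1 : x'' t + ((α / t ^ q) • x' t + g' (x t) + (a / t ^ p) • x t) = 0 := by
        rw [← h0]; abel
      exact eq_neg_of_add_eq_zero_left h1
    rw [hode]
    have htq : (0:ℝ) < t ^ q := Real.rpow_pos_of_pos ht0 q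
    have htp : (0:ℝ) < t ^ p := Real.rpow_pos_of_pos ht0 p
    have eB : t^(2*q-1) = t^q*t^q/t := by
      rw [show 2*q-1 = q + q - 1 by ring, Real.rpow_sub ht0, Real.rpow_add ht0, Real.rpow_one]
    have eA : t^(2*q) = t^q*t^q := by
      rw [show 2*q = q + q by ring, Real.rpow_add ht0]
    have eD : t^(2*q-p-1) = t^q*t^q/(t^p*t) := by
      rw [show 2*q-p-1 = (q + q) - (p + 1) by ring, Real.rpow_sub ht0, Real.rpow_add ht0,
        Real.rpow_add ht0, Real.rpow_one]
    have eC : t^(2*q-p) = t^q*t^q/t^p := by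
      rw [show 2*q-p = (q + q) - p by ring, Real.rpow_sub ht0, Real.rpow_add ht0]
    have eE : t^(q-1) = t^q/t := by
      rw [Real.rpow_sub ht0, Real.rpow_one]
    have eF : t^(q-1-1) = t^q/(t*t) := by
      rw [show q-1-1 = q - (1+1) by ring, Real.rpow_sub ht0, Real.rpow_add ht0, Real.rpow_one]
    have eG : t^(q+1-p-1) = t^q/t^p := by
      rw [show q+1-p-1 = q - p by ring, Real.rpow_sub ht0]
    rw [eB, eD, eC, eF, eG, eA, eE]
    simp only [inner_add_left, inner_add_right, inner_sub_left, inner_sub_right, inner_neg_left,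
      inner_neg_right, real_inner_smul_left, real_inner_smul_right,
      real_inner_comm (x' t) (x t), real_inner_comm (xstar) (x t), real_inner_comm (xstar) (x' t),
      real_inner_comm (x' t) (g' (x t)), real_inner_comm (x t) (g' (x t)),
      real_inner_comm (xstar) (g' (x t))]
    rw [hK]
    field_simp
    ring
  have hmono : AntitoneOn EE (Ici T) := by
    apply antitoneOn_of_deriv_nonpos (convex_Ici T)
    · exact fun t ht => (hder t ht).continuousAt.continuousWithinAt
    · intro t ht
      rw [interior_Ici] at ht
      exact (hder t (mem_Ioi.mp ht).le).differentiableAt.differentiableWithinAt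
    · intro t ht
      rw [interior_Ici] at ht
      have htI : t ∈ Ici T := le_of_lt (mem_Ioi.mp ht)
      rw [(hder t htI).deriv, hDD]
      have hTt : T ≤ t := htI
      have ht0 : (0:ℝ) < t := lt_of_lt_of_le one_pos (le_trans hT1 hTt)
      have htq : (0:ℝ) < t ^ q := Real.rpow_pos_of_pos ht0 q
      have htp : (0:ℝ) < t ^ p := Real.rpow_pos_of_pos ht0 p
      have eE : t^(q-1) = t^q/t := by rw [Real.rpow_sub ht0, Real.rpow_one]
      have e2 : t^(2-p) = t*t/t^p := by
        rw [Real.rpow_sub ht0, show ((2:ℝ)) = ((2:ℕ):ℝ) by norm_num, Real.rpow_natCast]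
        ring_nf
      obtain ⟨hc1', hc2'⟩ := hTcond t hTt
      have hUX : ⟪x t - xstar, x t⟫ = (⟪x t, x t⟫ - W + ⟪x t - xstar, x t - xstar⟫)/2 := by
        rw [hW]; simp only [inner_sub_left, inner_sub_right]
        rw [real_inner_comm (xstar) (x t)]; ring
      have hGU : g (x t) - g xstar ≤ ⟪g' (x t), x t - xstar⟫ := by
        have h := grad_convex_ineq g hg_convex (hg_grad (x t)) xstar
        have hneg : ⟪g' (x t), xstar - x t⟫ = -⟪g' (x t), x t - xstar⟫ := by
          rw [show xstar - x t = -(x t - xstar) by abel, inner_neg_right]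
        rw [hneg] at h; linarith
      exact scalar_ineq t (t^q) (t^p) (g (x t) - g xstar) ⟪x t, x t⟫ ⟪x t, x' t⟫
        ⟪x t - xstar, x t - xstar⟫ ⟪x t - xstar, x' t⟫ ⟪x' t, x' t⟫ ⟪g' (x t), x' t⟫
        ⟪g' (x t), x t - xstar⟫ ⟪x t - xstar, x t⟫ W α a q p htq ht0 htp hα ha0 hp0
        hUX hGU (sub_nonneg.mpr (hxstar (x t))) real_inner_self_nonneg real_inner_self_nonneg
        real_inner_self_nonneg (by rw [← eE]; exact hc1'.le) (by rw [← e2]; exact hc2')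
  -- bound the energy
  set M : ℝ := EE T with hM
  have hterms : ∀ t ≥ T, t^(2*q) * (g (x t) - g xstar) ≤ EE t ∧
      1/2 * ⟪(α/2) • (x t - xstar) + t^q • x' t, (α/2) • (x t - xstar) + t^q • x' t⟫ ≤ EE t ∧
      α^2/16 * ⟪x t - xstar, x t - xstar⟫ ≤ EE t ∧ 0 ≤ EE t := by
    intro t hTt
    have ht0 : (0:ℝ) < t := lt_of_lt_of_le one_pos (le_trans hT1 hTt)
    obtain ⟨hc1', _⟩ := hTcond t hTt
    have hs1 : 0 ≤ t^(2*q) * (g (x t) - g xstar) :=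
      mul_nonneg (Real.rpow_nonneg ht0.le _) (sub_nonneg.mpr (hxstar (x t)))
    have hs2 : 0 ≤ a/2 * t^(2*q-p) * ⟪x t, x t⟫ :=
      mul_nonneg (mul_nonneg (by positivity) (Real.rpow_nonneg ht0.le _)) real_inner_self_nonneg
    have hs3 : 0 ≤ 1/2 * ⟪(α/2) • (x t - xstar) + t^q • x' t, (α/2) • (x t - xstar) + t^q • x' t⟫ :=
      mul_nonneg (by norm_num) real_inner_self_nonneg
    have hs4 : α^2/16 * ⟪x t - xstar, x t - xstar⟫ ≤
        α/2/2 * (α - α/2 - q * t^(q-1)) * ⟪x t - xstar, x t - xstar⟫ := by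
      apply mul_le_mul_of_nonneg_right _ real_inner_self_nonneg
      nlinarith
    have hs4' : 0 ≤ α^2/16 * ⟪x t - xstar, x t - xstar⟫ :=
      mul_nonneg (by positivity) real_inner_self_nonneg
    have hs5 : 0 ≤ K * t^(q+1-p) := mul_nonneg hK0 (Real.rpow_nonneg ht0.le _)
    have hEEt : EE t = t^(2*q) * (g (x t) - g xstar) + a/2 * t^(2*q-p) * ⟪x t, x t⟫
        + 1/2 * ⟪(α/2) • (x t - xstar) + t^q • x' t, (α/2) • (x t - xstar) + t^q • x' t⟫
        + α/2/2 * (α - α/2 - q * t^(q-1)) * ⟪x t - xstar, x t - xstar⟫ + K * t^(q+1-p) := by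
      rw [hEE]
    refine ⟨by rw [hEEt]; linarith, by rw [hEEt]; linarith, by rw [hEEt]; linarith,
      by rw [hEEt]; linarith⟩
  have hM0 : 0 ≤ M := (hterms T le_rfl).2.2.2
  have hle : ∀ t ≥ T, EE t ≤ M := fun t hTt => hmono self_mem_Ici hTt hTt
  clear_value M K W EE DD
  constructor
  · -- velocity bound
    refine ⟨Real.sqrt (2*M) + (α/2)*Real.sqrt (16*M/α^2) + 1, by positivity, T, hTt₀, ?_⟩
    intro t hTt
    have ht0 : (0:ℝ) < t := lt_of_lt_of_le one_pos (le_trans hT1 hTt)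
    have htq : (0:ℝ) < t ^ q := Real.rpow_pos_of_pos ht0 q
    obtain ⟨_, hs3, hs4, _⟩ := hterms t hTt
    have hEt := hle t hTt
    have hnormh : ‖(α/2) • (x t - xstar) + t^q • x' t‖ ≤ Real.sqrt (2*M) := by
      apply (Real.le_sqrt (norm_nonneg _) (by linarith)).mpr
      have hs3' : 1/2 * ⟪(α/2) • (x t - xstar) + t^q • x' t, (α/2) • (x t - xstar) + t^q • x' t⟫ ≤ EE t := hs3
      have h2M : ⟪(α/2) • (x t - xstar) + t^q • x' t, (α/2) • (x t - xstar) + t^q • x' t⟫ ≤ 2*M := by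
        linarith [hs3', hEt]
      exact le_trans (le_of_eq (real_inner_self_eq_norm_sq _).symm) h2M
    have hnormu : ‖x t - xstar‖ ≤ Real.sqrt (16*M/α^2) := by
      apply (Real.le_sqrt (norm_nonneg _) (div_nonneg (by linarith) (by positivity))).mpr
      have hPU : ⟪x t - xstar, x t - xstar⟫ ≤ 16*M/α^2 := by
        have hs4' : α^2/16 * ⟪x t - xstar, x t - xstar⟫ ≤ EE t := hs4
        rw [le_div_iff₀ (by positivity : (0:ℝ) < α^2)]
        nlinarith [hs4', hEt, (real_inner_self_nonneg : (0:ℝ) ≤ ⟪x t - xstar, x t - xstar⟫)]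
      exact le_trans (le_of_eq (real_inner_self_eq_norm_sq _).symm) hPU
    have hnv : t^q * ‖x' t‖ ≤ Real.sqrt (2*M) + (α/2)*Real.sqrt (16*M/α^2) := by
      have h1 : ‖t^q • x' t‖ = t^q * ‖x' t‖ := by
        rw [norm_smul, Real.norm_eq_abs, abs_of_pos htq]
      have h2 : ‖t^q • x' t‖ ≤ ‖(α/2) • (x t - xstar) + t^q • x' t‖ + ‖(α/2) • (x t - xstar)‖ := by
        have hns := norm_sub_le ((α/2) • (x t - xstar) + t^q • x' t) ((α/2) • (x t - xstar))
        have hsimp : (α/2) • (x t - xstar) + t^q • x' t - (α/2) • (x t - xstar) = t^q • x' t := by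
          abel
        rwa [hsimp] at hns
      have h3 : ‖(α/2) • (x t - xstar)‖ = (α/2) * ‖x t - xstar‖ := by
        rw [norm_smul, Real.norm_eq_abs, abs_of_pos (by positivity : (0:ℝ) < α/2)]
      have h4 : (α/2) * ‖x t - xstar‖ ≤ (α/2) * Real.sqrt (16*M/α^2) :=
        mul_le_mul_of_nonneg_left hnormu (by positivity)
      rw [h1] at h2
      linarith
    rw [abs_of_nonneg (norm_nonneg _), le_div_iff₀ htq]
    nlinarith [Real.sqrt_nonneg (2*M), Real.sqrt_nonneg (16*M/α^2), norm_nonneg (x' t)]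
  · -- function value bound
    refine ⟨M + 1, by linarith, T, hTt₀, ?_⟩
    intro t hTt
    have ht0 : (0:ℝ) < t := lt_of_lt_of_le one_pos (le_trans hT1 hTt)
    have htq : (0:ℝ) < t ^ (2*q) := Real.rpow_pos_of_pos ht0 _
    obtain ⟨hs1, _, _, _⟩ := hterms t hTt
    have hEt := hle t hTt
    rw [abs_of_nonneg (sub_nonneg.mpr (hxstar (x t))), le_div_iff₀ htq]
    nlinarith [sub_nonneg.mpr (hxstar (x t))]
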